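/- arXiv:2603.24717 — 2 statements merged into one kernel-verified Lean document; each statement's English description precedes it below -/
import Mathlib

section
/- Let |ψ⟩ satisfy (−1)ᵇ Q|ψ⟩ = |ψ⟩ where Q is a Hermitian involution and b ∈ {0,1}, and let P be a Hermitian involution with PQ = −QP. Then for each r ∈ {0,1}: Q^{r+b} · exp(i(π/4)(iQP)) |ψ⟩ = (−1)^{b(r+b)} · (I + (−1)ʳ P)/√2 · |ψ⟩, where the exponent r+b is taken mod 2. -/
open Matrix

set_option maxHeartbeats 1000000 in
/-- exponential of a scalar multiple of an idempotent matrix -/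
lemma exp_smul_idem {d : ℕ} (E : Matrix (Fin d) (Fin d) ℂ) (hE : E * E = E) (c : ℂ) :
    NormedSpace.exp (c • E) = 1 + (Complex.exp c - 1) • E := by
  letI : SeminormedRing (Matrix (Fin d) (Fin d) ℂ) := Matrix.linftyOpSemiNormedRing
  letI : NormedRing (Matrix (Fin d) (Fin d) ℂ) := Matrix.linftyOpNormedRing
  letI : NormedAlgebra ℂ (Matrix (Fin d) (Fin d) ℂ) := Matrix.linftyOpNormedAlgebra
  have hpow : ∀ n : ℕ, E ^ (n + 1) = E := by
    intro n
    induction n with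
    | zero => simp
    | succ k ih => rw [pow_succ, ih, hE]
  have hsumM : Summable (fun n : ℕ => ((n.factorial : ℂ))⁻¹ • (c • E) ^ n) :=
    NormedSpace.expSeries_summable' (c • E)
  have hsumg : Summable (fun n : ℕ => ((n.factorial : ℂ))⁻¹ • c ^ n) :=
    NormedSpace.expSeries_summable' c
  have hsumg' : Summable (fun n : ℕ => (((n + 1).factorial : ℂ))⁻¹ • c ^ (n + 1)) :=
    (summable_nat_add_iff 1).mpr hsumg
  have hexpc : Complex.exp c = ∑' n : ℕ, ((n.factorial : ℂ))⁻¹ • c ^ n := by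
    rw [Complex.exp_eq_exp_ℂ, NormedSpace.exp_eq_tsum ℂ]
  have hsum2 : (∑' n : ℕ, (((n + 1).factorial : ℂ))⁻¹ • c ^ (n + 1)) = Complex.exp c - 1 := by
    have h0 := hsumg.tsum_eq_zero_add
    rw [← hexpc] at h0
    simp only [Nat.factorial_zero, pow_zero, Nat.cast_one, inv_one, one_smul] at h0
    rw [h0]; ring
  rw [NormedSpace.exp_eq_tsum ℂ]
  dsimp only
  rw [hsumM.tsum_eq_zero_add]
  have hterm : (fun n : ℕ => (((n + 1).factorial : ℂ))⁻¹ • (c • E) ^ (n + 1))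
      = fun n : ℕ => ((((n + 1).factorial : ℂ))⁻¹ • c ^ (n + 1)) • E := by
    funext n
    rw [smul_pow, hpow, smul_smul, smul_eq_mul]
  simp only [pow_zero, Nat.factorial_zero, Nat.cast_one, inv_one, one_smul]
  rw [hterm, hsumg'.tsum_smul_const, hsum2]

set_option maxHeartbeats 1000000 in
/-- exponential of a scalar multiple of an involution -/
lemma exp_smul_invol {d : ℕ} (M : Matrix (Fin d) (Fin d) ℂ) (hM : M * M = 1) (c : ℂ) :
    NormedSpace.exp (c • M) =
      Complex.exp (-c) • (1 : Matrix (Fin d) (Fin d) ℂ) +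
        (Complex.exp c - Complex.exp (-c)) • ((2⁻¹ : ℂ) • (1 + M)) := by
  letI : SeminormedRing (Matrix (Fin d) (Fin d) ℂ) := Matrix.linftyOpSemiNormedRing
  letI : NormedRing (Matrix (Fin d) (Fin d) ℂ) := Matrix.linftyOpNormedRing
  letI : NormedAlgebra ℂ (Matrix (Fin d) (Fin d) ℂ) := Matrix.linftyOpNormedAlgebra
  set E : Matrix (Fin d) (Fin d) ℂ := (2⁻¹ : ℂ) • (1 + M) with hEdef
  have hexpand : (1 + M) * (1 + M) = (2 : ℂ) • (1 + M) := by
    rw [add_mul, mul_add, mul_add, one_mul, one_mul, mul_one, hM, two_smul]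
    abel
  have hE : E * E = E := by
    rw [hEdef, Matrix.smul_mul, Matrix.mul_smul, hexpand, smul_smul, smul_smul]
    norm_num
  have hdecomp : c • M = (2 * c) • E + (-c) • (1 : Matrix (Fin d) (Fin d) ℂ) := by
    rw [hEdef, smul_smul, smul_add]
    have h2 : (2 * c * 2⁻¹ : ℂ) = c := by ring
    rw [h2, add_comm, ← add_assoc, ← add_smul]
    norm_num
  have hcomm : Commute ((2 * c) • E) ((-c) • (1 : Matrix (Fin d) (Fin d) ℂ)) :=
    ((Commute.one_right E).smul_left (2 * c)).smul_right (-c)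
  rw [hdecomp, Matrix.exp_add_of_commute _ _ hcomm]
  rw [exp_smul_idem E hE, exp_smul_idem 1 (by simp) (-c)]
  have h1 : (1 : Matrix (Fin d) (Fin d) ℂ) + (Complex.exp (-c) - 1) • (1 : Matrix (Fin d) (Fin d) ℂ)
      = Complex.exp (-c) • (1 : Matrix (Fin d) (Fin d) ℂ) := by
    rw [sub_smul, one_smul]; abel
  rw [h1, Matrix.mul_smul, mul_one, smul_add, smul_smul]
  have hscal : Complex.exp (-c) * (Complex.exp (2 * c) - 1)
      = Complex.exp c - Complex.exp (-c) := by
    rw [mul_sub, mul_one, ← Complex.exp_add]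
    have harg : -c + 2 * c = c := by ring
    rw [harg]
  rw [hscal]

/-- Measurement as unitary with phase: if `(−1)ᵇ Q |ψ⟩ = |ψ⟩` and `P`
anticommutes with `Q`, then for each outcome `r ∈ {0,1}`,
`Q^{(r+b) mod 2} exp(i(π/4)(iQP)) |ψ⟩ = (−1)^{b((r+b) mod 2)} (I + (−1)ʳ P)/√2 |ψ⟩`. -/
theorem measure_as_exp {d : ℕ} (P Q : Matrix (Fin d) (Fin d) ℂ)
    (ψ : Fin d → ℂ) (b r : ℕ) (hb : b ≤ 1) (hr : r ≤ 1)
    (hQ2 : Q * Q = 1) (hQH : Qᴴ = Q)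
    (hP2 : P * P = 1) (hPH : Pᴴ = P)
    (hanti : P * Q = -(Q * P))
    (hstab : ((-1 : ℂ) ^ b) • Q.mulVec ψ = ψ) :
    (Q ^ ((r + b) % 2)).mulVec
        ((NormedSpace.exp ((Complex.I * (Real.pi / 4 : ℝ)) •
          (Complex.I • (Q * P)))).mulVec ψ) =
      ((-1 : ℂ) ^ (b * ((r + b) % 2))) •
        ((Real.sqrt 2 : ℂ)⁻¹ •
          (((1 : Matrix (Fin d) (Fin d) ℂ) + ((-1 : ℂ) ^ r) • P).mulVec ψ)) := by
  -- (QP)^2 = -1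
  have hQPQP : (Q * P) * (Q * P) = -(1 : Matrix (Fin d) (Fin d) ℂ) := by
    calc (Q * P) * (Q * P) = Q * ((P * Q) * P) := by
          rw [mul_assoc, ← mul_assoc P Q P]
      _ = Q * ((-(Q * P)) * P) := by rw [hanti]
      _ = -(Q * (Q * (P * P))) := by rw [neg_mul, mul_neg, mul_assoc]
      _ = -(1 : Matrix (Fin d) (Fin d) ℂ) := by
          rw [hP2, mul_one, hQ2]
  have hMM : (Complex.I • (Q * P)) * (Complex.I • (Q * P)) = 1 := by
    rw [Matrix.smul_mul, Matrix.mul_smul, smul_smul, Complex.I_mul_I, hQPQP]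
    simp
  -- scalar facts
  have h2R : Real.sqrt 2 * Real.sqrt 2 = 2 := Real.mul_self_sqrt (by norm_num)
  have hsne : Real.sqrt 2 ≠ 0 := by positivity
  have hhalf : (Real.sqrt 2)⁻¹ = Real.sqrt 2 / 2 := by
    rw [eq_div_iff (by norm_num : (2:ℝ) ≠ 0), inv_mul_eq_div, div_eq_iff hsne, h2R]
  set x : ℝ := Real.pi / 4 with hxdef
  have hec : Complex.exp (Complex.I * (x : ℂ)) = (Real.cos x : ℂ) + (Real.sin x : ℂ) * Complex.I := by
    rw [mul_comm, Complex.exp_mul_I, Complex.ofReal_cos, Complex.ofReal_sin]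
  have hec' : Complex.exp (-(Complex.I * (x : ℂ))) = (Real.cos x : ℂ) - (Real.sin x : ℂ) * Complex.I := by
    rw [show -(Complex.I * (x : ℂ)) = (-(x : ℂ)) * Complex.I by ring,
      Complex.exp_mul_I, Complex.cos_neg, Complex.sin_neg,
      Complex.ofReal_cos, Complex.ofReal_sin]
    ring
  have hcosx : Real.cos x = (Real.sqrt 2)⁻¹ := by
    rw [hxdef, Real.cos_pi_div_four, hhalf]
  have hsinx : Real.sin x = (Real.sqrt 2)⁻¹ := by
    rw [hxdef, Real.sin_pi_div_four, hhalf]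
  -- the exponential
  have hexp : NormedSpace.exp ((Complex.I * (x : ℂ)) • (Complex.I • (Q * P)))
      = ((Real.sqrt 2 : ℝ) : ℂ)⁻¹ • ((1 : Matrix (Fin d) (Fin d) ℂ) - Q * P) := by
    rw [exp_smul_invol _ hMM, hec, hec', hcosx, hsinx]
    push_cast
    match_scalars
    · ring
    · linear_combination (((Real.sqrt 2 : ℝ) : ℂ))⁻¹ * Complex.I_mul_I
  -- vector facts
  have hsq : ((-1 : ℂ) ^ b) * ((-1 : ℂ) ^ b) = 1 := by
    rw [← pow_add]
    exact Even.neg_one_pow ⟨b, rfl⟩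
  have hQψ : Q.mulVec ψ = ((-1 : ℂ) ^ b) • ψ := by
    conv_rhs => rw [← hstab]
    rw [smul_smul, hsq, one_smul]
  have hanti' : Q * P = -(P * Q) := by rw [hanti, neg_neg]
  have key : (Q * P).mulVec ψ = (-((-1 : ℂ) ^ b)) • P.mulVec ψ := by
    rw [hanti', Matrix.neg_mulVec, ← Matrix.mulVec_mulVec, hQψ, Matrix.mulVec_smul, ← neg_smul]
  rw [hexp, Matrix.smul_mulVec, Matrix.sub_mulVec, Matrix.one_mulVec, key]
  interval_cases b <;> interval_cases r <;>
    norm_num [Matrix.mulVec_smul, Matrix.mulVec_sub, Matrix.mulVec_add, Matrix.one_mulVec,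
      Matrix.add_mulVec, Matrix.smul_mulVec, Matrix.mulVec_mulVec, hQψ, key,
      smul_sub, smul_add, sub_eq_add_neg, Matrix.mulVec_neg, Matrix.neg_mulVec, smul_neg, neg_smul, neg_neg,
      Matrix.mulVec_mulVec] <;>
    module
end

section
/- Let P₁, P₂ be commuting Hermitian involutions and Q another Hermitian involution such that Q either commutes or anticommutes with each of P₁, P₂; write ⟦Pᵢ,Q⟧ = 0 if they commute and 1 if they anticommute. Then Λ(P₁,P₂) · Q · Λ(P₁,P₂) = P₁^{⟦P₂,Q⟧} · Q · P₂^{⟦P₁,Q⟧}. -/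
open Matrix

/-- Controlled-Pauli operator `Λ(P₁,P₂) = (I+P₁)/2 + ((I−P₁)/2)·P₂`. -/
noncomputable def ctrlPauli {d : ℕ} (P₁ P₂ : Matrix (Fin d) (Fin d) ℂ) :
    Matrix (Fin d) (Fin d) ℂ :=
  ((1 : ℂ) / 2) • ((1 : Matrix (Fin d) (Fin d) ℂ) + P₁) +
    ((1 : ℂ) / 2) • (((1 : Matrix (Fin d) (Fin d) ℂ) - P₁) * P₂)

/-- `Λ(P₁,P₂) Q Λ(P₁,P₂) = P₁^{⟦P₂,Q⟧} Q P₂^{⟦P₁,Q⟧}`, where `⟦Pᵢ,Q⟧ ∈ {0,1}`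
records whether `Pᵢ` and `Q` commute (`0`) or anticommute (`1`). -/
theorem ctrlPauli_conj {d : ℕ} (P₁ P₂ Q : Matrix (Fin d) (Fin d) ℂ)
    (h1 : P₁ * P₁ = 1) (h1H : P₁ᴴ = P₁)
    (h2 : P₂ * P₂ = 1) (h2H : P₂ᴴ = P₂)
    (hQ : Q * Q = 1) (hQH : Qᴴ = Q)
    (hcomm : P₁ * P₂ = P₂ * P₁)
    (c₁ c₂ : ℕ) (hc₁ : c₁ ≤ 1) (hc₂ : c₂ ≤ 1)
    (h1Q : P₁ * Q = ((-1 : ℂ) ^ c₁) • (Q * P₁))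
    (h2Q : P₂ * Q = ((-1 : ℂ) ^ c₂) • (Q * P₂)) :
    ctrlPauli P₁ P₂ * Q * ctrlPauli P₁ P₂ = P₁ ^ c₂ * Q * P₂ ^ c₁ := by
  have A1 : ∀ X, P₁ * (P₁ * X) = X := fun X => by rw [← mul_assoc, h1, one_mul]
  have A2 : ∀ X, P₂ * (P₂ * X) = X := fun X => by rw [← mul_assoc, h2, one_mul]
  have AQ : ∀ X, Q * (Q * X) = X := fun X => by rw [← mul_assoc, hQ, one_mul]
  have S1 : ∀ X, P₁ * (Q * X) = ((-1:ℂ)^c₁) • (Q * (P₁ * X)) := fun X => by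
    rw [← mul_assoc, h1Q, smul_mul_assoc, mul_assoc]
  have S2 : ∀ X, P₂ * (Q * X) = ((-1:ℂ)^c₂) • (Q * (P₂ * X)) := fun X => by
    rw [← mul_assoc, h2Q, smul_mul_assoc, mul_assoc]
  have SC : ∀ X, P₂ * (P₁ * X) = P₁ * (P₂ * X) := fun X => by
    rw [← mul_assoc, ← hcomm, mul_assoc]
  have hcomm' : P₂ * P₁ = P₁ * P₂ := hcomm.symm
  interval_cases c₁ <;> interval_cases c₂ <;>
    simp only [pow_zero, pow_one, one_smul, neg_smul] at h1Q h2Q S1 S2 ⊢ <;>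
    simp only [ctrlPauli, add_mul, mul_add, sub_mul, mul_sub, smul_mul_assoc,
      mul_smul_comm, smul_add, smul_sub, smul_smul, one_mul, mul_one,
      mul_assoc, A1, A2, AQ, S1, S2, SC, h1Q, h2Q, h1, h2, hQ, hcomm',
      mul_neg, neg_mul, smul_neg, neg_neg] <;>
    module
end
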